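/- For X uniformly distributed on [0,1] and n ≥ 1, ∫_0^1 (min(n, 1/x) − min(n, ⌊1/x⌋)) dx = 1 − γ + O(1/n); i.e., the integral differs from 1 − γ by at most C/n for an absolute constant C. -/

import Mathlib

open Set MeasureTheory Real intervalIntegral

/-- The fractional part of `1/x`, as an explicit function. -/
noncomputable def fracInv : ℝ → ℝ := fun x => 1 / x - ((⌊1 / x⌋ : ℤ) : ℝ)

lemma measurable_fracInv : Measurable fracInv := by
  have h1 : Measurable fun x : ℝ => 1 / x := measurable_const.div measurable_id
  exact h1.sub ((measurable_from_top (f := (Int.cast : ℤ → ℝ))).comp h1.floor)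

lemma measurable_fn (n : ℕ) :
    Measurable fun x : ℝ => min (n : ℝ) (1 / x) - min (n : ℝ) ((⌊1 / x⌋ : ℤ) : ℝ) := by
  have h1 : Measurable fun x : ℝ => 1 / x := measurable_const.div measurable_id
  have h2 : Measurable fun x : ℝ => ((⌊1 / x⌋ : ℤ) : ℝ) :=
    (measurable_from_top (f := (Int.cast : ℤ → ℝ))).comp h1.floor
  exact (measurable_const.min h1).sub (measurable_const.min h2)

lemma fn_bounds (n : ℕ) {x : ℝ} (hx : 0 < x) :
    0 ≤ min (n : ℝ) (1 / x) - min (n : ℝ) ((⌊1 / x⌋ : ℤ) : ℝ) ∧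
      min (n : ℝ) (1 / x) - min (n : ℝ) ((⌊1 / x⌋ : ℤ) : ℝ) ≤ 1 := by
  have hb1 : ((⌊1 / x⌋ : ℤ) : ℝ) ≤ 1 / x := Int.floor_le _
  have hb2 : 1 / x < ((⌊1 / x⌋ : ℤ) : ℝ) + 1 := Int.lt_floor_add_one _
  rcases min_cases (n : ℝ) (1 / x) with ⟨e1, l1⟩ | ⟨e1, l1⟩ <;>
    rcases min_cases (n : ℝ) ((⌊1 / x⌋ : ℤ) : ℝ) with ⟨e2, l2⟩ | ⟨e2, l2⟩ <;>
    constructor <;> rw [e1, e2] <;> linarith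

lemma floor_inv_eq {n : ℕ} (hn : 1 ≤ n) {x : ℝ}
    (hx : x ∈ Ioc (1 / ((n : ℝ) + 1)) (1 / (n : ℝ))) : ⌊1 / x⌋ = (n : ℤ) := by
  have hn0 : (0 : ℝ) < n := by exact_mod_cast hn
  have hx0 : 0 < x := lt_trans (by positivity) hx.1
  rw [Int.floor_eq_iff]
  have h1 : (n : ℝ) ≤ 1 / x := by
    rw [le_div_iff₀ hx0]
    have h := hx.2
    rw [le_div_iff₀ hn0] at h
    nlinarith [h]
  have h2 : 1 / x < (n : ℝ) + 1 := by
    rw [div_lt_iff₀ hx0]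
    have := hx.1
    rw [div_lt_iff₀ (by positivity : (0:ℝ) < (n:ℝ)+1)] at this
    nlinarith [this]
  constructor <;> push_cast <;> [exact h1; exact h2]

lemma fracInv_eq_on {n : ℕ} (hn : 1 ≤ n) :
    EqOn fracInv (fun x => 1 / x - (n : ℝ)) (Ioc (1 / ((n : ℝ) + 1)) (1 / (n : ℝ))) := by
  intro x hx
  simp only [fracInv, floor_inv_eq hn hx, Int.cast_natCast]

lemma piece_intervalIntegrable {n : ℕ} (hn : 1 ≤ n) :
    IntervalIntegrable fracInv volume (1 / ((n : ℝ) + 1)) (1 / (n : ℝ)) := by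
  have hn0 : (0 : ℝ) < n := by exact_mod_cast hn
  have hab : (1 : ℝ) / ((n : ℝ) + 1) ≤ 1 / (n : ℝ) := by
    apply one_div_le_one_div_of_le hn0; linarith
  have h0 : ∀ x : ℝ, x ∈ Set.uIcc (1 / ((n : ℝ) + 1)) (1 / (n : ℝ)) → x ≠ 0 := by
    intro x hx
    rw [uIcc_of_le hab] at hx
    have : (0:ℝ) < 1 / ((n:ℝ)+1) := by positivity
    exact ne_of_gt (lt_of_lt_of_le this hx.1)
  have h1 : IntervalIntegrable (fun x : ℝ => 1 / x - (n : ℝ)) volume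
      (1 / ((n : ℝ) + 1)) (1 / (n : ℝ)) :=
    (intervalIntegrable_one_div h0 continuousOn_id).sub intervalIntegrable_const
  rw [intervalIntegrable_iff] at h1 ⊢
  rw [uIoc_of_le hab] at h1 ⊢
  exact h1.congr_fun (fun x hx => (fracInv_eq_on hn hx).symm) measurableSet_Ioc

lemma piece_integral {n : ℕ} (hn : 1 ≤ n) :
    ∫ x in (1 / ((n : ℝ) + 1))..(1 / (n : ℝ)), fracInv x
      = (Real.log ((n : ℝ) + 1) - Real.log n) - 1 / ((n : ℝ) + 1) := by
  have hn0 : (0 : ℝ) < n := by exact_mod_cast hn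
  have hab : (1 : ℝ) / ((n : ℝ) + 1) ≤ 1 / (n : ℝ) := by
    apply one_div_le_one_div_of_le hn0; linarith
  have h0 : ∀ x : ℝ, x ∈ Set.uIcc (1 / ((n : ℝ) + 1)) (1 / (n : ℝ)) → x ≠ 0 := by
    intro x hx
    rw [uIcc_of_le hab] at hx
    have : (0:ℝ) < 1 / ((n:ℝ)+1) := by positivity
    exact ne_of_gt (lt_of_lt_of_le this hx.1)
  have h0' : (0:ℝ) ∉ Set.uIcc (1 / ((n : ℝ) + 1)) (1 / (n : ℝ)) := fun h => h0 0 h rfl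
  rw [integral_of_le hab, setIntegral_congr_fun measurableSet_Ioc (fracInv_eq_on hn),
    ← integral_of_le hab]
  rw [intervalIntegral.integral_sub
    (intervalIntegrable_one_div h0 continuousOn_id :
      IntervalIntegrable (fun x : ℝ => 1 / x) volume _ _)
    intervalIntegrable_const, integral_one_div h0', intervalIntegral.integral_const]
  rw [show (1 / (n:ℝ)) / (1 / ((n:ℝ)+1)) = ((n:ℝ)+1) / n by
    rw [div_div_div_eq]; ring_nf]
  rw [Real.log_div (by positivity) (by positivity)]
  have e : (1 / (n:ℝ) - 1 / ((n:ℝ)+1)) • (n : ℝ) = 1 / ((n:ℝ)+1) := by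
    rw [smul_eq_mul]
    field_simp
    ring
  rw [e]

lemma key_integral : ∀ n : ℕ, 1 ≤ n →
    IntervalIntegrable fracInv volume (1 / (n : ℝ)) 1 ∧
      ∫ x in (1 / (n : ℝ))..1, fracInv x = Real.log n - ((harmonic n : ℝ) - 1) := by
  intro n hn
  induction n with
  | zero => omega
  | succ m ih =>
    rcases Nat.eq_zero_or_pos m with rfl | hm
    · refine ⟨by norm_num, ?_⟩
      norm_num [harmonic_succ]
    · obtain ⟨ih1, ih2⟩ := ih hm
      have hpush : ((m : ℝ) + 1) = ((m + 1 : ℕ) : ℝ) := by push_cast; ring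
      have hpi : IntervalIntegrable fracInv volume (1 / ((m : ℝ) + 1)) (1 / (m : ℝ)) :=
        piece_intervalIntegrable hm
      constructor
      · rw [← hpush]; exact hpi.trans ih1
      · rw [← hpush, ← intervalIntegral.integral_add_adjacent_intervals hpi ih1,
          piece_integral hm, ih2, harmonic_succ]
        push_cast
        ring

lemma harmonic_bounds {n : ℕ} (hn : 1 ≤ n) :
    |((harmonic n : ℝ) - Real.log n) - Real.eulerMascheroniConstant| ≤ 1 / n := by
  have hn0 : (0 : ℝ) < n := by exact_mod_cast hn
  have h1 : Real.eulerMascheroniConstant < (harmonic n : ℝ) - Real.log n := by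
    have := Real.eulerMascheroniConstant_lt_eulerMascheroniSeq' n
    rwa [Real.eulerMascheroniSeq', if_neg (by omega)] at this
  have h2 : (harmonic n : ℝ) - Real.log ((n : ℝ) + 1) < Real.eulerMascheroniConstant := by
    have := Real.eulerMascheroniSeq_lt_eulerMascheroniConstant n
    rwa [Real.eulerMascheroniSeq] at this
  have h3 : Real.log ((n : ℝ) + 1) - Real.log n ≤ 1 / n := by
    rw [← Real.log_div (by positivity) (by positivity)]
    have := Real.log_le_sub_one_of_pos (show (0:ℝ) < ((n:ℝ)+1)/n by positivity)
    have e : ((n:ℝ)+1)/n - 1 = 1/n := by field_simp; ring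
    linarith [e ▸ this]
  rw [abs_le]
  constructor <;> nlinarith [h1, h2, h3]

theorem integral_min_inv_sub_min_floor :
    ∃ C : ℝ, ∀ n : ℕ, 1 ≤ n →
      |(∫ x in Ioc (0:ℝ) 1, (min (n : ℝ) (1 / x) - min (n : ℝ) ((⌊1 / x⌋ : ℤ) : ℝ)))
          - (1 - Real.eulerMascheroniConstant)| ≤ C / n := by
  refine ⟨2, fun n hn => ?_⟩
  have hn0 : (0 : ℝ) < n := by exact_mod_cast hn
  set f : ℝ → ℝ := fun x => min (n : ℝ) (1 / x) - min (n : ℝ) ((⌊1 / x⌋ : ℤ) : ℝ) with hf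
  have h1n1 : (1 : ℝ) / n ≤ 1 := by
    rw [div_le_one hn0]; exact_mod_cast hn
  have h1n0 : (0 : ℝ) ≤ 1 / n := by positivity
  -- integrability of f on pieces
  have hbound : ∀ x ∈ Ioc (0:ℝ) 1, ‖f x‖ ≤ 1 := by
    intro x hx
    rw [Real.norm_eq_abs, abs_le]
    obtain ⟨hb0, hb1⟩ := fn_bounds n hx.1
    refine ⟨?_, ?_⟩ <;> simp only [hf] <;> linarith
  have hint : IntegrableOn f (Ioc (0:ℝ) 1) volume := by
    refine Measure.integrableOn_of_bounded (M := 1) ?_ (measurable_fn n).aestronglyMeasurable ?_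
    · rw [Real.volume_Ioc]; simp
    · rw [ae_restrict_iff' measurableSet_Ioc]
      exact Filter.Eventually.of_forall hbound
  have hsplit : Ioc (0:ℝ) 1 = Ioc 0 (1/(n:ℝ)) ∪ Ioc (1/(n:ℝ)) 1 :=
    (Ioc_union_Ioc_eq_Ioc h1n0 h1n1).symm
  have hi1 : IntegrableOn f (Ioc (0:ℝ) (1/(n:ℝ))) volume :=
    hint.mono_set (Ioc_subset_Ioc_right h1n1)
  have hi2 : IntegrableOn f (Ioc (1/(n:ℝ)) 1) volume :=
    hint.mono_set (Ioc_subset_Ioc_left h1n0)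
  have heq : ∫ x in Ioc (0:ℝ) 1, f x
      = (∫ x in Ioc (0:ℝ) (1/(n:ℝ)), f x) + ∫ x in Ioc (1/(n:ℝ)) 1, f x := by
    rw [hsplit, setIntegral_union (Ioc_disjoint_Ioc_of_le le_rfl) measurableSet_Ioc hi1 hi2]
  have hfeq : EqOn f fracInv (Ioc (1/(n:ℝ)) 1) := by
    intro x hx
    have hx0 : 0 < x := lt_trans (by positivity) hx.1
    have hlt : 1 / x < (n:ℝ) := by
      rw [div_lt_iff₀ hx0]
      have := hx.1
      rw [div_lt_iff₀ hn0] at this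
      nlinarith [this]
    have hfl : ((⌊1/x⌋ : ℤ) : ℝ) ≤ (n:ℝ) := le_of_lt (lt_of_le_of_lt (Int.floor_le _) hlt)
    simp only [hf, fracInv, min_eq_right hlt.le, min_eq_right hfl]
  have hval2 : ∫ x in Ioc (1/(n:ℝ)) 1, f x = Real.log n - ((harmonic n : ℝ) - 1) := by
    rw [setIntegral_congr_fun measurableSet_Ioc hfeq, ← integral_of_le h1n1,
      (key_integral n hn).2]
  set E := ∫ x in Ioc (0:ℝ) (1/(n:ℝ)), f x with hE
  have hEbd : |E| ≤ 1 / n := by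
    have := norm_setIntegral_le_of_norm_le_const (μ := volume) (s := Ioc (0:ℝ) (1/(n:ℝ)))
      (C := 1) (f := f) ?_ ?_
    · rw [Real.norm_eq_abs] at this
      calc |E| ≤ 1 * (volume (Ioc (0:ℝ) (1/(n:ℝ)))).toReal := this
        _ = 1 / n := by rw [Real.volume_Ioc, sub_zero, ENNReal.toReal_ofReal h1n0]; ring
    · rw [Real.volume_Ioc]; exact ENNReal.ofReal_lt_top
    · intro x hx
      exact hbound x ⟨hx.1, le_trans hx.2 h1n1⟩
  have hrw : (∫ x in Ioc (0:ℝ) 1, f x) - (1 - Real.eulerMascheroniConstant)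
      = E - (((harmonic n : ℝ) - Real.log n) - Real.eulerMascheroniConstant) := by
    rw [heq, hval2]; ring
  have habs := harmonic_bounds hn
  calc |(∫ x in Ioc (0:ℝ) 1, f x) - (1 - Real.eulerMascheroniConstant)|
      = |E - (((harmonic n : ℝ) - Real.log n) - Real.eulerMascheroniConstant)| := by rw [hrw]
    _ ≤ |E| + |((harmonic n : ℝ) - Real.log n) - Real.eulerMascheroniConstant| := abs_sub _ _
    _ ≤ 1 / n + 1 / n := add_le_add hEbd habs
    _ = 2 / n := by ring
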